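/- Necessary condition for minimality (rank): let P ∈ ℝ^{k×k} have at most one nonzero entry, equal to ±1, in each row and each column, and suppose rank(P) < k. Then the pair W1 = P (I − ΛS⁻²)^{1/2} Uᵀ, W2 = U (I − ΛS⁻²)^{1/2} Pᵀ is not a local minimum of L: there exists a nonzero direction (δW1, δW2) such that the function h(t) = L(W1 + t·δW1, W2 + t·δW2) satisfies h'(0) = 0 and h''(0) < 0. -/

import Mathlib

open Matrix BigOperators

attribute [local instance] Matrix.frobeniusNormedAddCommGroup Matrix.frobeniusNormedSpace

/-- Squared Frobenius norm. -/
noncomputable def frobSq {a b : ℕ} (M : Matrix (Fin a) (Fin b) ℝ) : ℝ :=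
  ∑ i, ∑ j, (M i j) ^ 2

/-- The non-uniform ℓ2 regularized linear autoencoder loss. -/
noncomputable def LAEloss (m k n : ℕ) (X : Matrix (Fin m) (Fin n) ℝ) (lam : Fin k → ℝ)
    (p : Matrix (Fin k) (Fin m) ℝ × Matrix (Fin m) (Fin k) ℝ) : ℝ :=
  (1 / (n : ℝ)) * frobSq (X - p.2 * p.1 * X)
    + frobSq (Matrix.diagonal (fun i => Real.sqrt (lam i)) * p.1)
    + frobSq (p.2 * Matrix.diagonal (fun i => Real.sqrt (lam i)))

lemma frobSq_eq_trace {a b : ℕ} (M : Matrix (Fin a) (Fin b) ℝ) :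
    frobSq M = Matrix.trace (Mᵀ * M) := by
  unfold frobSq Matrix.trace
  simp only [Matrix.diag, Matrix.mul_apply, Matrix.transpose_apply, sq]
  exact Finset.sum_comm

lemma LAE_loss_eq (m k n : ℕ) (X : Matrix (Fin m) (Fin n) ℝ) (lam sig2 : Fin k → ℝ)
    (hlam_nn : ∀ i, 0 ≤ lam i)
    (U : Matrix (Fin m) (Fin k) ℝ) (hUorth : Uᵀ * U = 1)
    (hG : (1 / (n : ℝ)) • (Uᵀ * (X * Xᵀ) * U) = Matrix.diagonal sig2)
    (C : Matrix (Fin k) (Fin k) ℝ) :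
    LAEloss m k n X lam (C * Uᵀ, U * Cᵀ) =
      (1 / (n : ℝ)) * Matrix.trace (Xᵀ * X)
        - 2 * Matrix.trace (Matrix.diagonal sig2 * (Cᵀ * C))
        + Matrix.trace ((Cᵀ * C) * (Cᵀ * C) * Matrix.diagonal sig2)
        + 2 * Matrix.trace (Cᵀ * Matrix.diagonal lam * C) := by
  have hΛ : (Matrix.diagonal fun i => Real.sqrt (lam i)) * (Matrix.diagonal fun i => Real.sqrt (lam i))
      = Matrix.diagonal lam := by
    rw [Matrix.diagonal_mul_diagonal]
    exact congrArg Matrix.diagonal (funext fun i => Real.mul_self_sqrt (hlam_nn i))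
  set Λh := Matrix.diagonal fun i : Fin k => Real.sqrt (lam i) with hΛh
  have hΛhT : Λhᵀ = Λh := Matrix.diagonal_transpose _
  set M := Cᵀ * C with hMdef
  have hMT : Mᵀ = M := by rw [hMdef, Matrix.transpose_mul, Matrix.transpose_transpose]
  have hreg1 : frobSq (Λh * (C * Uᵀ)) = Matrix.trace (Cᵀ * Matrix.diagonal lam * C) := by
    rw [frobSq_eq_trace]
    have h1 : (Λh * (C * Uᵀ))ᵀ * (Λh * (C * Uᵀ)) = U * (Cᵀ * (Λh * (Λh * (C * Uᵀ)))) := by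
      simp only [Matrix.transpose_mul, Matrix.transpose_transpose, hΛhT, Matrix.mul_assoc]
    rw [h1, Matrix.trace_mul_comm]
    have h2 : Cᵀ * (Λh * (Λh * (C * Uᵀ))) * U = Cᵀ * Matrix.diagonal lam * C * (Uᵀ * U) := by
      rw [← hΛ]; simp only [Matrix.mul_assoc]
    rw [h2, hUorth, Matrix.mul_one]
  have hreg2 : frobSq ((U * Cᵀ) * Λh) = Matrix.trace (Cᵀ * Matrix.diagonal lam * C) := by
    rw [frobSq_eq_trace]
    have h1 : ((U * Cᵀ) * Λh)ᵀ * ((U * Cᵀ) * Λh) = Λh * (C * ((Uᵀ * U) * (Cᵀ * Λh))) := by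
      simp only [Matrix.transpose_mul, Matrix.transpose_transpose, hΛhT, Matrix.mul_assoc]
    rw [h1, hUorth, Matrix.one_mul, Matrix.trace_mul_comm]
    have h2 : C * (Cᵀ * Λh) * Λh = C * (Cᵀ * Matrix.diagonal lam) := by
      rw [← hΛ]; simp only [Matrix.mul_assoc]
    rw [h2, Matrix.trace_mul_comm]
  have hmain : (1 / (n : ℝ)) * frobSq (X - (U * Cᵀ) * (C * Uᵀ) * X) =
      (1 / (n : ℝ)) * Matrix.trace (Xᵀ * X)
        - 2 * Matrix.trace (Matrix.diagonal sig2 * M)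
        + Matrix.trace (M * M * Matrix.diagonal sig2) := by
    have hN : (U * Cᵀ) * (C * Uᵀ) = U * M * Uᵀ := by
      simp only [hMdef, Matrix.mul_assoc]
    rw [hN, frobSq_eq_trace]
    have hcross : Matrix.trace (Xᵀ * (U * M * Uᵀ * X)) = Matrix.trace ((Uᵀ * (X * Xᵀ) * U) * M) := by
      rw [show Xᵀ * (U * M * Uᵀ * X) = (Xᵀ * (U * M)) * (Uᵀ * X) by simp only [Matrix.mul_assoc],
        Matrix.trace_mul_comm]
      congr 1
      simp only [Matrix.mul_assoc]
    have hquad : Matrix.trace ((Xᵀ * (U * M * Uᵀ)) * (U * M * Uᵀ * X))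
        = Matrix.trace (M * M * (Uᵀ * (X * Xᵀ) * U)) := by
      rw [show (Xᵀ * (U * M * Uᵀ)) * (U * M * Uᵀ * X)
          = (Xᵀ * U) * (M * ((Uᵀ * U) * (M * (Uᵀ * X)))) by simp only [Matrix.mul_assoc],
        hUorth, Matrix.one_mul, Matrix.trace_mul_comm]
      congr 1
      simp only [Matrix.mul_assoc]
    have hexp : (X - U * M * Uᵀ * X)ᵀ * (X - U * M * Uᵀ * X)
        = Xᵀ * X - Xᵀ * (U * M * Uᵀ * X) - Xᵀ * (U * M * Uᵀ * X)
          + (Xᵀ * (U * M * Uᵀ)) * (U * M * Uᵀ * X) := by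
      rw [Matrix.transpose_sub, Matrix.sub_mul, Matrix.mul_sub, Matrix.mul_sub]
      have h3 : (U * M * Uᵀ * X)ᵀ = Xᵀ * (U * M * Uᵀ) := by
        simp only [Matrix.transpose_mul, Matrix.transpose_transpose, hMT, Matrix.mul_assoc]
      rw [h3]
      have h2 : Xᵀ * (U * M * Uᵀ) * X = Xᵀ * (U * M * Uᵀ * X) := by
        simp only [Matrix.mul_assoc]
      rw [h2]
      abel
    rw [hexp]
    simp only [Matrix.trace_add, Matrix.trace_sub]
    rw [hcross, hquad]
    have hGfact : ∀ A : Matrix (Fin k) (Fin k) ℝ,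
        (1 / (n : ℝ)) * Matrix.trace (A * (Uᵀ * (X * Xᵀ) * U)) = Matrix.trace (A * Matrix.diagonal sig2) := by
      intro A
      rw [← hG, Matrix.mul_smul, Matrix.trace_smul, smul_eq_mul]
    have hGfact' : (1 / (n : ℝ)) * Matrix.trace ((Uᵀ * (X * Xᵀ) * U) * M)
        = Matrix.trace (Matrix.diagonal sig2 * M) := by
      rw [← hG, Matrix.smul_mul, Matrix.trace_smul, smul_eq_mul]
    linear_combination (-2:ℝ) * hGfact' + hGfact (M * M)
  unfold LAEloss
  simp only []
  rw [hreg1, hreg2, hmain]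
  ring

lemma sq_one_of_pm {x : ℝ} (h : x = 0 ∨ x = 1 ∨ x = -1) (hne : x ≠ 0) : x * x = 1 := by
  rcases h with h | h | h <;> simp_all

lemma exists_zero_row_col (k : ℕ) (P : Matrix (Fin k) (Fin k) ℝ)
    (hP01 : ∀ i j, P i j = 0 ∨ P i j = 1 ∨ P i j = -1)
    (hProw : ∀ i j j', P i j ≠ 0 → P i j' ≠ 0 → j = j')
    (hPcol : ∀ i i' j, P i j ≠ 0 → P i' j ≠ 0 → i = i')
    (hPrank : P.rank < k) :
    (∃ i₀, ∀ j, P i₀ j = 0) ∧ (∃ j₀, ∀ i, P i j₀ = 0) := by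
  constructor
  · by_contra h
    push_neg at h
    choose g hg using h
    have hPPt : P * Pᵀ = 1 := by
      ext a b
      rw [Matrix.mul_apply, Matrix.one_apply]
      by_cases hab : a = b
      · subst hab
        simp only [if_pos rfl]
        rw [Finset.sum_eq_single (g a)]
        · exact sq_one_of_pm (hP01 a (g a)) (hg a)
        · intro j _ hj
          have hz : P a j = 0 := by
            by_contra hne
            exact hj (hProw a j (g a) hne (hg a))
          simp [hz]
        · simp
      · rw [if_neg hab]
        apply Finset.sum_eq_zero
        intro j _
        by_cases h1 : P a j = 0
        · simp [h1]
        by_cases h2 : P b j = 0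
        · simp [Matrix.transpose_apply, h2]
        exact absurd (hPcol a b j h1 h2) hab
    have : P.rank = k := by
      rw [Matrix.rank_of_isUnit P ((Matrix.isUnit_iff_isUnit_det P).mpr (Matrix.isUnit_det_of_right_inverse hPPt))]
      simp
    omega
  · by_contra h
    push_neg at h
    choose f hf using h
    have hPtP : Pᵀ * P = 1 := by
      ext a b
      rw [Matrix.mul_apply, Matrix.one_apply]
      by_cases hab : a = b
      · subst hab
        simp only [if_pos rfl, Matrix.transpose_apply]
        rw [Finset.sum_eq_single (f a)]
        · exact sq_one_of_pm (hP01 (f a) a) (hf a)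
        · intro i _ hi
          have hz : P i a = 0 := by
            by_contra hne
            exact hi (hPcol i (f a) a hne (hf a))
          simp [hz]
        · simp
      · rw [if_neg hab]
        apply Finset.sum_eq_zero
        intro i _
        simp only [Matrix.transpose_apply]
        by_cases h1 : P i a = 0
        · simp [h1]
        by_cases h2 : P i b = 0
        · simp [h2]
        exact absurd (hProw i a b h1 h2) hab
    have : P.rank = k := by
      rw [Matrix.rank_of_isUnit P ((Matrix.isUnit_iff_isUnit_det P).mpr (Matrix.isUnit_det_of_left_inverse hPtP))]
      simp
    omega

lemma diag_mul_sb {k : ℕ} (d : Fin k → ℝ) (i j : Fin k) :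
    Matrix.diagonal d * Matrix.single i j (1:ℝ) = Matrix.single i j (d i) := by
  ext a b
  simp [Matrix.mul_apply, Matrix.single, Matrix.diagonal, ite_and]
  split_ifs <;> first | rfl | (subst_vars; simp_all)

lemma sb_mul_diag {k : ℕ} (d : Fin k → ℝ) (i j : Fin k) :
    Matrix.single i j (1:ℝ) * Matrix.diagonal d = Matrix.single i j (d j) := by
  ext a b
  simp [Matrix.mul_apply, Matrix.single, Matrix.diagonal, ite_and]
  split_ifs <;> first | rfl | (subst_vars; simp_all)

lemma sb_transpose {k : ℕ} (i j : Fin k) :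
    (Matrix.single i j (1:ℝ))ᵀ = Matrix.single j i (1:ℝ) := by
  ext a b
  simp [Matrix.single, Matrix.transpose_apply, and_comm]

lemma zero_row_mul_sb {k : ℕ} (P : Matrix (Fin k) (Fin k) ℝ) (i₀ j₀ : Fin k)
    (h : ∀ j, P i₀ j = 0) : Pᵀ * Matrix.single i₀ j₀ (1:ℝ) = 0 := by
  ext a b
  simp [Matrix.mul_apply, Matrix.single, ite_and, h]

lemma zero_col_mul_sb {k : ℕ} (A : Matrix (Fin k) (Fin k) ℝ) (j₀ b₀ : Fin k)
    (h : ∀ i, A i j₀ = 0) : A * Matrix.single j₀ b₀ (1:ℝ) = 0 := by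
  ext a b
  simp [Matrix.mul_apply, Matrix.single, ite_and, h]

/-- Necessary condition for minimality (rank): if `P` is a reduced-rank signed partial
permutation matrix (`rank P < k`), then `(P (I − ΛS⁻²)^{1/2} Uᵀ, U (I − ΛS⁻²)^{1/2} Pᵀ)`
is not a local minimum: there is a nonzero direction along which the first derivative
vanishes and the second derivative is negative. -/
theorem reduced_rank_not_local_min (m k n : ℕ) (hk : 1 ≤ k) (hmk : k < m) (hn : 1 ≤ n)
    (X : Matrix (Fin m) (Fin n) ℝ) (lam : Fin k → ℝ)
    (hlam_pos : ∀ i, 0 < lam i) (hlam_mono : StrictMono lam)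
    (sig2 : Fin k → ℝ) (hs_anti : StrictAnti sig2) (hs_pos : ∀ i, 0 < sig2 i)
    (U : Matrix (Fin m) (Fin k) ℝ) (hUorth : Uᵀ * U = 1)
    (hUeig : ((1 / (n : ℝ)) • (X * Xᵀ)) * U = U * Matrix.diagonal sig2)
    (hrank : ((1 / (n : ℝ)) • (X * Xᵀ)).rank = k)
    (hlam_last : lam ⟨k - 1, by omega⟩ < sig2 ⟨k - 1, by omega⟩)
    (P : Matrix (Fin k) (Fin k) ℝ)
    (hP01 : ∀ i j, P i j = 0 ∨ P i j = 1 ∨ P i j = -1)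
    (hProw : ∀ i j j', P i j ≠ 0 → P i j' ≠ 0 → j = j')
    (hPcol : ∀ i i' j, P i j ≠ 0 → P i' j ≠ 0 → i = i')
    (hPrank : P.rank < k)
    (W1 : Matrix (Fin k) (Fin m) ℝ) (W2 : Matrix (Fin m) (Fin k) ℝ)
    (hW1 : W1 = P * Matrix.diagonal (fun i => Real.sqrt (1 - lam i / sig2 i)) * Uᵀ)
    (hW2 : W2 = U * Matrix.diagonal (fun i => Real.sqrt (1 - lam i / sig2 i)) * Pᵀ) :
    ∃ (d1 : Matrix (Fin k) (Fin m) ℝ) (d2 : Matrix (Fin m) (Fin k) ℝ),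
      (d1, d2) ≠ 0 ∧
      deriv (fun t : ℝ => LAEloss m k n X lam (W1 + t • d1, W2 + t • d2)) 0 = 0 ∧
      deriv (deriv (fun t : ℝ => LAEloss m k n X lam (W1 + t • d1, W2 + t • d2))) 0 < 0 := by
  obtain ⟨⟨i₀, hrow0⟩, ⟨j₀, hcol0⟩⟩ := exists_zero_row_col k P hP01 hProw hPcol hPrank
  set Dm := Matrix.diagonal (fun i => Real.sqrt (1 - lam i / sig2 i)) with hDm
  set E := Matrix.single i₀ j₀ (1:ℝ) with hE
  set Ejj := Matrix.single j₀ j₀ (1:ℝ) with hEjj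
  set C₀ := P * Dm with hC₀
  set d1 := E * Uᵀ with hd1def
  set d2 := U * Eᵀ with hd2def
  -- eigenvalue relation
  have hG : (1 / (n : ℝ)) • (Uᵀ * (X * Xᵀ) * U) = Matrix.diagonal sig2 := by
    have h := congrArg (fun A => Uᵀ * A) hUeig
    beta_reduce at h
    rw [← Matrix.mul_assoc, ← Matrix.mul_assoc, hUorth, Matrix.one_mul] at h
    rw [Matrix.mul_smul, Matrix.smul_mul] at h
    exact h
  -- curve
  have hc1 : ∀ t : ℝ, W1 + t • d1 = (C₀ + t • E) * Uᵀ := by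
    intro t
    rw [Matrix.add_mul, Matrix.smul_mul, hW1]
  have hc2 : ∀ t : ℝ, W2 + t • d2 = U * (C₀ + t • E)ᵀ := by
    intro t
    rw [Matrix.transpose_add, Matrix.transpose_smul, Matrix.mul_add, Matrix.mul_smul, hW2]
    congr 1
    rw [hC₀, Matrix.transpose_mul, Matrix.diagonal_transpose, Matrix.mul_assoc]
  -- structural zeros
  have hPtE : Pᵀ * E = 0 := zero_row_mul_sb P i₀ j₀ hrow0
  have hC0tE : C₀ᵀ * E = 0 := by
    rw [hC₀, Matrix.transpose_mul, Matrix.diagonal_transpose, Matrix.mul_assoc, hPtE,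
      Matrix.mul_zero]
  have hEtC0 : Eᵀ * C₀ = 0 := by
    have := congrArg Matrix.transpose hC0tE
    simpa [Matrix.transpose_mul] using this
  have hC0col : ∀ i, C₀ i j₀ = 0 := by
    intro i
    rw [hC₀, hDm, Matrix.mul_diagonal, hcol0, zero_mul]
  have hC0Ejj : C₀ * Ejj = 0 := zero_col_mul_sb C₀ j₀ j₀ hC0col
  have hEtE : Eᵀ * E = Ejj := by
    rw [hE, sb_transpose, Matrix.single_mul_single_same, one_mul]
  have hEjjT : Ejjᵀ = Ejj := by rw [hEjj, sb_transpose]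
  have hEjj2 : Ejj * Ejj = Ejj := by
    rw [hEjj, Matrix.single_mul_single_same, one_mul]
  have hM0Ejj : (C₀ᵀ * C₀) * Ejj = 0 := by
    rw [Matrix.mul_assoc, hC0Ejj, Matrix.mul_zero]
  have hEjjM0 : Ejj * (C₀ᵀ * C₀) = 0 := by
    have h := congrArg Matrix.transpose hM0Ejj
    simpa [Matrix.transpose_mul, hEjjT, Matrix.mul_assoc] using h
  have hΛE : Matrix.diagonal lam * E = lam i₀ • E := by
    rw [hE, diag_mul_sb]
    simp
  have hEtΛ : Eᵀ * Matrix.diagonal lam = lam i₀ • Eᵀ := by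
    rw [hE, sb_transpose, sb_mul_diag]
    simp [sb_transpose]
  -- trace constants
  have htrEjj : Matrix.trace Ejj = 1 := by
    rw [hEjj]
    simp [Matrix.trace, Matrix.diag, Matrix.single]
  have htrGEjj : Matrix.trace (Matrix.diagonal sig2 * Ejj) = sig2 j₀ := by
    rw [hEjj, diag_mul_sb]
    simp [Matrix.trace, Matrix.diag, Matrix.single]
  have htrEjjG : Matrix.trace (Ejj * Matrix.diagonal sig2) = sig2 j₀ := by
    rw [Matrix.trace_mul_comm]; exact htrGEjj
  have hlam_nn : ∀ i, 0 ≤ lam i := fun i => (hlam_pos i).le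
  -- the function along the curve is an explicit quartic
  set A0 : ℝ := (1 / (n : ℝ)) * Matrix.trace (Xᵀ * X)
      - 2 * Matrix.trace (Matrix.diagonal sig2 * (C₀ᵀ * C₀))
      + Matrix.trace ((C₀ᵀ * C₀) * (C₀ᵀ * C₀) * Matrix.diagonal sig2)
      + 2 * Matrix.trace (C₀ᵀ * Matrix.diagonal lam * C₀) with hA0
  set Bc : ℝ := 2 * lam i₀ - 2 * sig2 j₀ with hBc
  set Cc : ℝ := sig2 j₀ with hCc
  have hfun : (fun t : ℝ => LAEloss m k n X lam (W1 + t • d1, W2 + t • d2))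
      = fun t : ℝ => A0 + Bc * t ^ 2 + Cc * t ^ 4 := by
    funext t
    rw [hc1 t, hc2 t, LAE_loss_eq m k n X lam sig2 hlam_nn U hUorth hG (C₀ + t • E)]
    have hM : (C₀ + t • E)ᵀ * (C₀ + t • E) = C₀ᵀ * C₀ + (t ^ 2) • Ejj := by
      rw [Matrix.transpose_add, Matrix.transpose_smul, Matrix.add_mul, Matrix.mul_add,
        Matrix.mul_add, Matrix.mul_smul, hC0tE, Matrix.smul_mul, hEtC0, Matrix.smul_mul,
        Matrix.mul_smul, hEtE]
      simp [smul_smul, pow_two]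
    have hT1 : Matrix.trace (Matrix.diagonal sig2 * ((C₀ + t • E)ᵀ * (C₀ + t • E)))
        = Matrix.trace (Matrix.diagonal sig2 * (C₀ᵀ * C₀)) + t ^ 2 * sig2 j₀ := by
      rw [hM, Matrix.mul_add, Matrix.trace_add, Matrix.mul_smul, Matrix.trace_smul, htrGEjj,
        smul_eq_mul]
    have hT2 : Matrix.trace (((C₀ + t • E)ᵀ * (C₀ + t • E)) * ((C₀ + t • E)ᵀ * (C₀ + t • E))
          * Matrix.diagonal sig2)
        = Matrix.trace ((C₀ᵀ * C₀) * (C₀ᵀ * C₀) * Matrix.diagonal sig2) + t ^ 4 * sig2 j₀ := by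
      rw [hM]
      have hsq : (C₀ᵀ * C₀ + (t ^ 2) • Ejj) * (C₀ᵀ * C₀ + (t ^ 2) • Ejj)
          = (C₀ᵀ * C₀) * (C₀ᵀ * C₀) + (t ^ 4) • Ejj := by
        rw [Matrix.add_mul, Matrix.mul_add, Matrix.mul_add, Matrix.mul_smul, hM0Ejj,
          Matrix.smul_mul, hEjjM0, Matrix.smul_mul, Matrix.mul_smul, hEjj2]
        rw [smul_smul]
        rw [show t ^ 2 * t ^ 2 = t ^ 4 by ring]
        simp
      rw [hsq, Matrix.add_mul, Matrix.trace_add, Matrix.smul_mul, Matrix.trace_smul, htrEjjG,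
        smul_eq_mul]
    have hT3 : Matrix.trace ((C₀ + t • E)ᵀ * Matrix.diagonal lam * (C₀ + t • E))
        = Matrix.trace (C₀ᵀ * Matrix.diagonal lam * C₀) + t ^ 2 * lam i₀ := by
      have e1 : C₀ᵀ * Matrix.diagonal lam * E = 0 := by
        rw [Matrix.mul_assoc, hΛE, Matrix.mul_smul, hC0tE, smul_zero]
      have e2 : Eᵀ * Matrix.diagonal lam * C₀ = 0 := by
        rw [hEtΛ, Matrix.smul_mul, hEtC0, smul_zero]
      have e3 : Eᵀ * Matrix.diagonal lam * E = lam i₀ • Ejj := by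
        rw [hEtΛ, Matrix.smul_mul, hEtE]
      have hexp : (C₀ + t • E)ᵀ * Matrix.diagonal lam * (C₀ + t • E)
          = C₀ᵀ * Matrix.diagonal lam * C₀ + (t ^ 2 * lam i₀) • Ejj := by
        rw [Matrix.transpose_add, Matrix.transpose_smul, Matrix.add_mul, Matrix.add_mul,
          Matrix.mul_add, Matrix.mul_add]
        simp only [Matrix.smul_mul, Matrix.mul_smul, smul_smul]
        rw [e1, e2, e3]
        simp [smul_smul, pow_two, mul_assoc]
      rw [hexp]
      simp [Matrix.trace_add, Matrix.trace_smul, htrEjj, smul_eq_mul]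
    rw [hT1, hT2, hT3, hA0, hBc, hCc]
    ring
  -- strict inequality lam i₀ < sig2 j₀
  have hkm : k - 1 < k := by omega
  have hlt : lam i₀ < sig2 j₀ := by
    have h1 : lam i₀ ≤ lam ⟨k - 1, hkm⟩ := by
      apply hlam_mono.monotone
      rw [Fin.le_def]
      simp only []
      omega
    have h2 : sig2 ⟨k - 1, hkm⟩ ≤ sig2 j₀ := by
      apply hs_anti.antitone
      rw [Fin.le_def]
      simp only []
      omega
    calc lam i₀ ≤ lam ⟨k - 1, hkm⟩ := h1
      _ < sig2 ⟨k - 1, hkm⟩ := hlam_last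
      _ ≤ sig2 j₀ := h2
  -- derivative facts
  have hder : ∀ t : ℝ, HasDerivAt (fun s : ℝ => A0 + Bc * s ^ 2 + Cc * s ^ 4)
      (Bc * (2 * t) + Cc * (4 * t ^ 3)) t := by
    intro t
    have h1 : HasDerivAt (fun s : ℝ => s ^ 2) (2 * t) t := by
      simpa using hasDerivAt_pow 2 t
    have h2 : HasDerivAt (fun s : ℝ => s ^ 4) (4 * t ^ 3) t := by
      simpa using hasDerivAt_pow 4 t
    have h3 := ((hasDerivAt_const t A0).add (h1.const_mul Bc)).add (h2.const_mul Cc)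
    rw [zero_add] at h3
    exact h3
  have hderiv1 : deriv (fun s : ℝ => A0 + Bc * s ^ 2 + Cc * s ^ 4)
      = fun t : ℝ => Bc * (2 * t) + Cc * (4 * t ^ 3) := by
    funext t
    exact (hder t).deriv
  have hd1ne : d1 ≠ 0 := by
    intro h0
    have hUcol : ∀ c, U c j₀ = 0 := by
      intro c
      have h := congrFun (congrFun h0 i₀) c
      simpa [hd1def, hE, Matrix.mul_apply, Matrix.single, ite_and] using h
    have h1 : (Uᵀ * U) j₀ j₀ = 0 := by
      simp [Matrix.mul_apply, hUcol]
    rw [hUorth] at h1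
    simp [Matrix.one_apply] at h1
  refine ⟨d1, d2, ?_, ?_, ?_⟩
  · intro h
    exact hd1ne (congrArg Prod.fst h)
  · rw [hfun, (hder 0).deriv]
    norm_num
  · rw [hfun, hderiv1]
    have hg : HasDerivAt (fun t : ℝ => Bc * (2 * t) + Cc * (4 * t ^ 3))
        (Bc * 2 + Cc * (4 * (3 * 0 ^ 2))) 0 := by
      have h1 : HasDerivAt (fun t : ℝ => 2 * t) 2 0 := by
        simpa using (hasDerivAt_id (0:ℝ)).const_mul (2:ℝ)
      have h2 : HasDerivAt (fun t : ℝ => 4 * t ^ 3) (4 * (3 * 0 ^ 2)) 0 := by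
        simpa using (hasDerivAt_pow 3 (0:ℝ)).const_mul (4:ℝ)
      exact (h1.const_mul Bc).add (h2.const_mul Cc)
    rw [hg.deriv]
    rw [hBc]
    nlinarith [hlt]
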